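/- A divided power sequence (a_n)_{n≥0} on an element of a commutative ring of characteristic p is uniquely determined by its values a_{pn} on multiples of p. Concretely: if (a_n) and (b_n) are divided power sequences with a_{pn} = b_{pn} for all n, then a_n = b_n for all n. -/
import Mathlib


/-- A divided power sequence on an element of a commutative ring of characteristic `p`
is determined by its values on multiples of `p`: if `(s n)` and `(t n)` are divided power
sequences on the same element, agreeing at all indices `p * n`, then they agree everywhere. -/
theorem pd_seq_determined_by_multiples_of_p {p : ℕ} (hp : p.Prime)
    (A : Type*) [CommRing A] [CharP A p] (s t : ℕ → A)
    (hs0 : s 0 = 1)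
    (hsmul : ∀ n m : ℕ, (Nat.choose (n + m) n : A) * s (n + m) = s n * s m)
    (ht0 : t 0 = 1)
    (htmul : ∀ n m : ℕ, (Nat.choose (n + m) n : A) * t (n + m) = t n * t m)
    (h1 : s 1 = t 1)
    (hmult : ∀ n : ℕ, s (p * n) = t (p * n)) :
    ∀ n : ℕ, s n = t n := by
  haveI := Fact.mk hp
  have hu : ∀ n : ℕ, ¬ p ∣ n → IsUnit ((n : A)) := by
    intro n hn
    have hz : (n : ZMod p) ≠ 0 := by
      rwa [Ne, ZMod.natCast_eq_zero_iff]
    have : IsUnit ((n : ZMod p)) := isUnit_iff_ne_zero.mpr hz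
    have := this.map (ZMod.castHom (dvd_refl p) A)
    simpa using this
  intro n
  induction n using Nat.strong_induction_on with
  | _ n ih =>
    match n with
    | 0 => rw [hs0, ht0]
    | (k+1) =>
      by_cases hd : p ∣ (k+1)
      · obtain ⟨m, hm⟩ := hd
        rw [hm]; exact hmult m
      · have h := hsmul k 1
        have h' := htmul k 1
        rw [Nat.choose_succ_self_right] at h h'
        exact (hu (k+1) hd).mul_left_cancel (by rw [h, h', ih k (Nat.lt_succ_self k), h1])
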